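/- Fix ℓ ∈ [0, 1]. The forward time delay function Δt_f(τ) = τ + γ(τ) − θ(τ) is nonincreasing on the interval [π/2, π], and Δt_f(π) = 0. -/

import Mathlib

open Real

noncomputable def Haux (l s : ℝ) : ℝ :=
  Real.arctan (Real.sqrt (1 - l ^ 2) * Real.tan s / Real.sqrt (1 + l ^ 2 * Real.tan s ^ 2)) +
    Real.arctan (l * Real.tan s) - s

lemma Haux_hasDerivAt (l : ℝ) (hl0 : 0 ≤ l) (hl1 : l ≤ 1) {x : ℝ}
    (hx1 : -(π/2) < x) (hx2 : x < π/2) :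
    HasDerivAt (Haux l)
      (Real.sqrt (1 - l ^ 2) / Real.sqrt (1 + l ^ 2 * Real.tan x ^ 2)
        + l * (1 + Real.tan x ^ 2) / (1 + l ^ 2 * Real.tan x ^ 2) - 1) x := by
  have hcos : Real.cos x ≠ 0 := (Real.cos_pos_of_mem_Ioo ⟨hx1, hx2⟩).ne'
  have ht : HasDerivAt Real.tan (1 + Real.tan x ^ 2) x := by
    have h := Real.hasDerivAt_tan hcos
    have : (1:ℝ) / Real.cos x ^ 2 = 1 + Real.tan x ^ 2 := by
      rw [one_div, ← Real.inv_one_add_tan_sq hcos, inv_inv]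
    rwa [this] at h
  set t := Real.tan x with htdef
  set L := Real.sqrt (1 - l ^ 2) with hLdef
  have hL0 : 0 ≤ L := Real.sqrt_nonneg _
  have hL : L ^ 2 = 1 - l ^ 2 := Real.sq_sqrt (by nlinarith)
  have hq : 0 < 1 + l ^ 2 * t ^ 2 := by positivity
  set c := Real.sqrt (1 + l ^ 2 * t ^ 2) with hcdef
  have hc : c ^ 2 = 1 + l ^ 2 * t ^ 2 := Real.sq_sqrt hq.le
  have hc0 : 0 < c := Real.sqrt_pos.2 hq
  have h1t : (0:ℝ) < 1 + t ^ 2 := by positivity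
  have h1 : HasDerivAt (fun s : ℝ => 1 + l ^ 2 * Real.tan s ^ 2)
      (l ^ 2 * ((2 : ℕ) * t ^ 1 * (1 + t ^ 2))) x := ((ht.pow 2).const_mul (l ^ 2)).const_add 1
  have h2 : HasDerivAt (fun s : ℝ => Real.sqrt (1 + l ^ 2 * Real.tan s ^ 2))
      (1 / (2 * c) * (l ^ 2 * ((2 : ℕ) * t ^ 1 * (1 + t ^ 2)))) x :=
    (Real.hasDerivAt_sqrt hq.ne').comp x h1
  have h3 : HasDerivAt (fun s : ℝ => L * Real.tan s) (L * (1 + t ^ 2)) x := ht.const_mul L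
  have h4 := h3.div h2 hc0.ne'
  have h5 := (Real.hasDerivAt_arctan (L * t / c)).comp x h4
  have h6 := (Real.hasDerivAt_arctan (l * t)).comp x (ht.const_mul l)
  have h7 := (h5.add h6).sub (hasDerivAt_id x)
  have e0 : 1 + (L * t / c) ^ 2 = (1 + t ^ 2) / c ^ 2 := by
    field_simp
    linear_combination hc + t ^ 2 * hL
  have e2 : L * (1 + t ^ 2) * c - L * t * (1 / (2 * c) * (l ^ 2 * ((2:ℕ) * t ^ 1 * (1 + t ^ 2)))) =
      L * (1 + t ^ 2) / c := by
    have e2' : L * (1 + t ^ 2) * c - L * t * (1 / (2 * c) * (l ^ 2 * ((2:ℕ) * t ^ 1 * (1 + t ^ 2)))) =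
        L * (1 + t ^ 2) * (c ^ 2 - l ^ 2 * t ^ 2) / c := by
      push_cast; field_simp
    rw [e2', hc]; ring_nf
  have e3 : 1 / ((1 + t ^ 2) / c ^ 2) * (L * (1 + t ^ 2) / c / c ^ 2) = L / c := by
    field_simp
  have e4 : 1 / (1 + (l * t) ^ 2) * (l * (1 + t ^ 2)) = l * (1 + t ^ 2) / (1 + l ^ 2 * t ^ 2) := by
    rw [mul_pow]; ring
  refine h7.congr_deriv ?_
  rw [← htdef, e0, e2, e3, e4]


lemma Haux_deriv_nonneg (l : ℝ) (hl0 : 0 ≤ l) (hl1 : l ≤ 1) {x : ℝ}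
    (hx1 : -(π/2) < x) (hx2 : x < π/2) : 0 ≤ deriv (Haux l) x := by
  rw [(Haux_hasDerivAt l hl0 hl1 hx1 hx2).deriv]
  set t := Real.tan x with htdef
  set L := Real.sqrt (1 - l ^ 2) with hLdef
  have hL0 : 0 ≤ L := Real.sqrt_nonneg _
  have hL : L ^ 2 = 1 - l ^ 2 := Real.sq_sqrt (by nlinarith)
  have hq : 0 < 1 + l ^ 2 * t ^ 2 := by positivity
  set c := Real.sqrt (1 + l ^ 2 * t ^ 2) with hcdef
  have hc : c ^ 2 = 1 + l ^ 2 * t ^ 2 := Real.sq_sqrt hq.le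
  have hc0 : 0 < c := Real.sqrt_pos.2 hq
  have key : (1 - l) * (1 - l * t ^ 2) ≤ L * c := by
    rcases le_or_gt (1 - l * t ^ 2) 0 with h | h
    · have h0 : 0 ≤ L * c := mul_nonneg hL0 hc0.le
      nlinarith
    · have hLc : L * c = Real.sqrt ((1 - l ^ 2) * (1 + l ^ 2 * t ^ 2)) :=
        (Real.sqrt_mul (by nlinarith) _).symm
      rw [hLc]
      apply Real.le_sqrt_of_sq_le
      have hlt2 : 0 ≤ l * t ^ 2 := mul_nonneg hl0 (sq_nonneg t)
      have hbb : (1 - l * t ^ 2) ^ 2 ≤ 1 := by nlinarith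
      have e1 : ((1 - l) * (1 - l * t ^ 2)) ^ 2 ≤ (1 - l) ^ 2 := by
        calc ((1 - l) * (1 - l * t ^ 2)) ^ 2 = (1 - l) ^ 2 * (1 - l * t ^ 2) ^ 2 := by ring
          _ ≤ (1 - l) ^ 2 * 1 := mul_le_mul_of_nonneg_left hbb (sq_nonneg _)
          _ = (1 - l) ^ 2 := mul_one _
      have e2 : (1 - l) ^ 2 ≤ (1 - l ^ 2) * (1 + l ^ 2 * t ^ 2) := by
        nlinarith [mul_nonneg (sub_nonneg.2 hl1) hl0,
          mul_nonneg (mul_nonneg (mul_nonneg (sub_nonneg.2 hl1) (by linarith : (0:ℝ) ≤ 1 + l))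
            (mul_nonneg hl0 hl0)) (sq_nonneg t)]
      linarith
  have expand : L / c + l * (1 + t ^ 2) / (1 + l ^ 2 * t ^ 2) - 1 =
      (L * c + (l * (1 + t ^ 2) - (1 + l ^ 2 * t ^ 2))) / (1 + l ^ 2 * t ^ 2) := by
    rw [← hc]
    field_simp
    ring
  rw [expand]
  apply div_nonneg _ hq.le
  nlinarith [key]

lemma Haux_mono (l : ℝ) (hl0 : 0 ≤ l) (hl1 : l ≤ 1) :
    MonotoneOn (Haux l) (Set.Ico 0 (π/2)) := by
  have hpi : (0:ℝ) < π := pi_pos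
  apply monotoneOn_of_deriv_nonneg (convex_Ico _ _)
  · intro x hx
    exact (Haux_hasDerivAt l hl0 hl1 (by linarith [hx.1]) hx.2).differentiableAt.continuousAt.continuousWithinAt
  · rw [interior_Ico]
    intro x hx
    exact (Haux_hasDerivAt l hl0 hl1 (by linarith [hx.1]) hx.2).differentiableAt.differentiableWithinAt
  · rw [interior_Ico]
    intro x hx
    exact Haux_deriv_nonneg l hl0 hl1 (by linarith [hx.1]) hx.2

lemma Haux_le (l : ℝ) (hl0 : 0 ≤ l) (hl1 : l ≤ 1) {s : ℝ} (hs0 : 0 ≤ s) (hs : s < π/2) :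
    Haux l s ≤ (if 0 < l then Real.arctan (Real.sqrt (1 - l ^ 2) / l) else π / 2) := by
  have hpi : (0:ℝ) < π := pi_pos
  have hs1 : -(π/2) < s := by linarith
  have ht0 : 0 ≤ Real.tan s := Real.tan_nonneg_of_nonneg_of_le_pi_div_two hs0 hs.le
  have h1 : Real.arctan (l * Real.tan s) ≤ s := by
    calc Real.arctan (l * Real.tan s) ≤ Real.arctan (Real.tan s) :=
          Real.arctan_strictMono.monotone (by nlinarith)
      _ = s := Real.arctan_tan hs1 hs
  set t := Real.tan s with htdef
  set L := Real.sqrt (1 - l ^ 2) with hLdef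
  have hL0 : 0 ≤ L := Real.sqrt_nonneg _
  have hq : 0 < 1 + l ^ 2 * t ^ 2 := by positivity
  have hc0 : 0 < Real.sqrt (1 + l ^ 2 * t ^ 2) := Real.sqrt_pos.2 hq
  unfold Haux
  split_ifs with hl
  · have hltc : l * t ≤ Real.sqrt (1 + l ^ 2 * t ^ 2) :=
      Real.le_sqrt_of_sq_le (by nlinarith)
    have h2 : Real.arctan (L * t / Real.sqrt (1 + l ^ 2 * t ^ 2)) ≤ Real.arctan (L / l) := by
      apply Real.arctan_strictMono.monotone
      rw [div_le_div_iff₀ hc0 hl]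
      nlinarith [mul_le_mul_of_nonneg_left hltc hL0]
    linarith
  · have h2 := (Real.arctan_lt_pi_div_two (L * t / Real.sqrt (1 + l ^ 2 * t ^ 2))).le
    linarith

/-- Tortoise coordinate `γ(τ)` along the null geodesic of angular momentum `ℓ`:
`γ(τ) = arctan(√(1−ℓ²)·tan τ / √(1+ℓ²·tan²τ))` for `τ ∈ [0, π/2)`, with
`γ(π/2) = arctan(√(1−ℓ²)/ℓ)` if `ℓ > 0` and `π/2` if `ℓ = 0`, and
`γ(τ) = γ(π − τ)` for `τ ∈ (π/2, π]`. -/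
noncomputable def tortoiseGamma (l τ : ℝ) : ℝ :=
  if τ < π / 2 then
    Real.arctan (Real.sqrt (1 - l ^ 2) * Real.tan τ /
      Real.sqrt (1 + l ^ 2 * Real.tan τ ^ 2))
  else if τ = π / 2 then
    (if 0 < l then Real.arctan (Real.sqrt (1 - l ^ 2) / l) else π / 2)
  else
    Real.arctan (Real.sqrt (1 - l ^ 2) * Real.tan (π - τ) /
      Real.sqrt (1 + l ^ 2 * Real.tan (π - τ) ^ 2))

/-- Boundary angle `θ(τ)` along the null geodesic of angular momentum `ℓ`:
`θ(τ) = arctan(ℓ·tan τ)` for `τ ∈ [0, π/2)`, `θ(π/2) = π/2`, and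
`θ(τ) = π − θ(π − τ)` for `τ ∈ (π/2, π]`. -/
noncomputable def boundaryTheta (l τ : ℝ) : ℝ :=
  if τ < π / 2 then Real.arctan (l * Real.tan τ)
  else if τ = π / 2 then π / 2
  else π - Real.arctan (l * Real.tan (π - τ))

lemma F_eq (l : ℝ) {τ : ℝ} (h1 : π / 2 < τ) :
    τ + tortoiseGamma l τ - boundaryTheta l τ = Haux l (π - τ) := by
  unfold tortoiseGamma boundaryTheta Haux
  rw [if_neg (not_lt.2 h1.le), if_neg (not_lt.2 h1.le), if_neg (ne_of_gt h1),
    if_neg (ne_of_gt h1)]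
  ring

/-- The forward time delay `Δt_f(τ) = τ + γ(τ) − θ(τ)` is nonincreasing on `[π/2, π]`,
and `Δt_f(π) = 0`. -/
theorem forward_delay_antitone (l : ℝ) (hl : l ∈ Set.Icc (0 : ℝ) 1) :
    AntitoneOn (fun τ => τ + tortoiseGamma l τ - boundaryTheta l τ)
      (Set.Icc (π / 2) π) ∧
    π + tortoiseGamma l π - boundaryTheta l π = 0 := by
  have hpi : (0:ℝ) < π := pi_pos
  constructor
  · intro a ha b hb hab
    obtain ⟨ha1, ha2⟩ := ha
    obtain ⟨hb1, hb2⟩ := hb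
    simp only
    rcases eq_or_lt_of_le hb1 with hb' | hb'
    · have hab' : a = b := le_antisymm hab (hb' ▸ ha1)
      rw [hab']
    · rw [F_eq l hb']
      have hmb0 : (0:ℝ) ≤ π - b := by linarith
      have hmb2 : π - b < π / 2 := by linarith
      rcases eq_or_lt_of_le ha1 with ha' | ha'
      · rw [← ha']
        have hv : π / 2 + tortoiseGamma l (π / 2) - boundaryTheta l (π / 2) =
            (if 0 < l then Real.arctan (Real.sqrt (1 - l ^ 2) / l) else π / 2) := by
          simp [tortoiseGamma, boundaryTheta]
        rw [hv]
        exact Haux_le l hl.1 hl.2 hmb0 hmb2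
      · rw [F_eq l ha']
        exact Haux_mono l hl.1 hl.2 ⟨hmb0, hmb2⟩ ⟨by linarith, by linarith⟩ (by linarith)
  · have h1 : ¬ (π < π / 2) := by linarith
    have h2 : π ≠ π / 2 := by intro h; linarith [h]
    simp [tortoiseGamma, boundaryTheta, h1, h2]
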